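/- arXiv:1903.06067 — 6 statements merged into one kernel-verified Lean document; each statement's English description precedes it below -/
import Mathlib

section
/- Let p, q ∈ ℝ³ \ {0} and let ω ∈ S² be a unit vector, with post-collision momenta p', q' defined by the stated parametrization. Then ρ(p,q)² ≤ 4 min(|p||q|, |p'||q'|). -/
noncomputable section

open MeasureTheory Real Metric
open scoped RealInnerProductSpace

/-- Momentum space `ℝ³`. -/
abbrev R3 : Type := EuclideanSpace ℝ (Fin 3)

/-- The relative momentum `ρ(p,q) = √(2(|p||q| − p·q))`. -/
def relMom (p q : R3) : ℝ := Real.sqrt (2 * (‖p‖ * ‖q‖ - ⟪p, q⟫))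

/-- Post-collision momentum `p'`. -/
def pPost (p q ω : R3) : R3 :=
  (1 / 2 : ℝ) • (p + q) + (relMom p q / 2) • ω
    + (⟪p + q, ω⟫ / 2 / (‖p‖ + ‖q‖ + relMom p q)) • (p + q)

/-- Post-collision momentum `q'`. -/
def qPost (p q ω : R3) : R3 :=
  (1 / 2 : ℝ) • (p + q) - (relMom p q / 2) • ω
    - (⟪p + q, ω⟫ / 2 / (‖p‖ + ‖q‖ + relMom p q)) • (p + q)

/-- Post-collision energy `p'⁰`. -/
def p0Post (p q ω : R3) : ℝ := (‖p‖ + ‖q‖) / 2 + ⟪p + q, ω⟫ / 2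

/-- Post-collision energy `q'⁰`. -/
def q0Post (p q ω : R3) : ℝ := (‖p‖ + ‖q‖) / 2 - ⟪p + q, ω⟫ / 2

/-- The surface measure `dω` on the unit sphere `S² ⊂ ℝ³` (total mass `4π`). -/
def sphMeasure : Measure (sphere (0 : R3) 1) := (volume : Measure R3).toSphere

/-- The (modified, for `ε > 0`) massless Boltzmann collision operator with scattering
cross-section `σ = C₁ h^{-b}`. -/
def Qcoll (C₁ b ε : ℝ) (f : R3 → ℝ) (p : R3) : ℝ :=
  C₁ * ∫ q : R3, ∫ ω : sphere (0 : R3) 1,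
      (if ε ≤ relMom p q then relMom p q ^ (2 - b) / (‖p‖ * ‖q‖) else 0)
        * (f (pPost p q ω) * f (qPost p q ω) - f p * f q) ∂sphMeasure

/-- **Lemma 1.** `ρ(p,q)² ≤ 4 min(|p||q|, |p'||q'|)`. -/
theorem relMom_sq_le_four_min (p q ω : R3) (hp : p ≠ 0) (hq : q ≠ 0) (hω : ‖ω‖ = 1) :
    relMom p q ^ 2 ≤ 4 * min (‖p‖ * ‖q‖) (‖pPost p q ω‖ * ‖qPost p q ω‖) := by
  have hcs : |⟪p, q⟫| ≤ ‖p‖ * ‖q‖ := abs_real_inner_le_norm p q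
  obtain ⟨hcs1, hcs2⟩ := abs_le.mp hcs
  have hρ0 : 0 ≤ relMom p q := Real.sqrt_nonneg _
  have hρsq : relMom p q ^ 2 = 2 * (‖p‖ * ‖q‖ - ⟪p, q⟫) := by
    rw [relMom, sq, Real.mul_self_sqrt (by nlinarith)]
  have h1 : relMom p q ^ 2 ≤ 4 * (‖p‖ * ‖q‖) := by nlinarith
  set ρ := relMom p q with hρdef
  set a := (⟪p + q, ω⟫ : ℝ) with ha
  set lam := ‖p‖ + ‖q‖ with hlamdef
  have hPsq : ‖p + q‖ ^ 2 = ‖p‖ ^ 2 + 2 * ⟪p, q⟫ + ‖q‖ ^ 2 := norm_add_sq_real p q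
  have hlr : lam ^ 2 = ‖p + q‖ ^ 2 + ρ ^ 2 := by rw [hPsq, hρsq]; ring
  have hPsub : ‖p + q‖ ^ 2 = lam ^ 2 - ρ ^ 2 := by linarith
  have hlpos : 0 < lam := by
    have h1 := norm_pos_iff.mpr hp
    have h2 := norm_pos_iff.mpr hq
    linarith
  have hs : 0 < lam + ρ := by linarith
  have hsne : lam + ρ ≠ 0 := ne_of_gt hs
  have haP : |a| ≤ ‖p + q‖ := by
    have h := abs_real_inner_le_norm (p + q) ω
    rwa [hω, mul_one] at h
  have hPl : ‖p + q‖ ≤ lam := norm_add_le p q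
  obtain ⟨haP1, haP2⟩ := abs_le.mp haP
  have hp0 : 0 ≤ lam + a := by linarith
  have hq0 : 0 ≤ lam - a := by linarith
  set c : ℝ := 1 / 2 + a / 2 / (lam + ρ) with hc
  have hp' : pPost p q ω = c • (p + q) + (ρ / 2) • ω := by
    simp only [pPost, hc, ← hρdef, ← ha, ← hlamdef]
    module
  have hq' : qPost p q ω = (1 - c) • (p + q) + (-(ρ / 2)) • ω := by
    simp only [qPost, hc, ← hρdef, ← ha, ← hlamdef]
    module
  have hnp : ‖pPost p q ω‖ ^ 2 = c ^ 2 * ‖p + q‖ ^ 2 + 2 * (c * (ρ / 2) * a) + (ρ / 2) ^ 2 := by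
    rw [hp', norm_add_sq_real, real_inner_smul_left, real_inner_smul_right,
      norm_smul, norm_smul, hω, ← ha]
    simp [Real.norm_eq_abs, mul_pow, sq_abs]
    rw [abs_of_nonneg hρ0]; ring
  have hnq : ‖qPost p q ω‖ ^ 2
      = (1 - c) ^ 2 * ‖p + q‖ ^ 2 + 2 * ((1 - c) * (-(ρ / 2)) * a) + (ρ / 2) ^ 2 := by
    rw [hq', norm_add_sq_real, real_inner_smul_left, real_inner_smul_right,
      norm_smul, norm_smul, hω, ← ha]
    simp [Real.norm_eq_abs, mul_pow, sq_abs]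
    rw [abs_of_nonneg hρ0]; ring
  have hnp2 : ‖pPost p q ω‖ ^ 2 = ((lam + a) / 2) ^ 2 := by
    rw [hnp, hPsub, hc]; field_simp; ring
  have hnq2 : ‖qPost p q ω‖ ^ 2 = ((lam - a) / 2) ^ 2 := by
    rw [hnq, hPsub, hc]; field_simp; ring
  have hnpv : ‖pPost p q ω‖ = (lam + a) / 2 := by
    have h := congrArg Real.sqrt hnp2
    rwa [Real.sqrt_sq (norm_nonneg _), Real.sqrt_sq (by linarith)] at h
  have hnqv : ‖qPost p q ω‖ = (lam - a) / 2 := by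
    have h := congrArg Real.sqrt hnq2
    rwa [Real.sqrt_sq (norm_nonneg _), Real.sqrt_sq (by linarith)] at h
  have h2 : ρ ^ 2 ≤ 4 * (‖pPost p q ω‖ * ‖qPost p q ω‖) := by
    rw [hnpv, hnqv]
    have ha2 : a ^ 2 ≤ ‖p + q‖ ^ 2 := sq_le_sq' haP1 haP2
    have hr : 4 * ((lam + a) / 2 * ((lam - a) / 2)) = lam ^ 2 - a ^ 2 := by ring
    linarith
  rcases min_cases (‖p‖ * ‖q‖) (‖pPost p q ω‖ * ‖qPost p q ω‖) with ⟨h, _⟩ | ⟨h, _⟩ <;>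
    rw [h] <;> [exact h1; exact h2]
end
end

section
/- Let p, q ∈ ℝ³ \ {0} and let ω ∈ S² be a unit vector, with post-collision momenta p', q' defined by the stated parametrization. Then the Povzner-type inequality |p'|² + |q'|² − |p|² − |q|² ≤ 2|p||q| holds. -/
noncomputable section

open MeasureTheory Real Metric
open scoped RealInnerProductSpace

/-- **Lemma 3 (Povzner inequality).** `|p'|² + |q'|² − |p|² − |q|² ≤ 2|p||q|`. -/
theorem povzner_inequality (p q ω : R3) (hp : p ≠ 0) (hq : q ≠ 0) (hω : ‖ω‖ = 1) :
    ‖pPost p q ω‖ ^ 2 + ‖qPost p q ω‖ ^ 2 - ‖p‖ ^ 2 - ‖q‖ ^ 2 ≤ 2 * (‖p‖ * ‖q‖) := by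
  have hcs : ⟪p, q⟫ ≤ ‖p‖ * ‖q‖ := real_inner_le_norm p q
  have hρ0 : 0 ≤ relMom p q := Real.sqrt_nonneg _
  have hρ2 : relMom p q ^ 2 = 2 * (‖p‖ * ‖q‖ - ⟪p, q⟫) :=
    Real.sq_sqrt (by nlinarith)
  set ρ := relMom p q with hρdef
  set t := ⟪p + q, ω⟫ with htdef
  set n := ‖p‖ + ‖q‖ with hndef
  have hn : 0 < n := by
    have := norm_pos_iff.mpr hp
    have := norm_nonneg q
    simp only [hndef]; linarith
  have hnρ : n + ρ ≠ 0 := by positivity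
  have hs2 : ‖p + q‖ ^ 2 = ‖p‖ ^ 2 + 2 * ⟪p, q⟫ + ‖q‖ ^ 2 := norm_add_sq_real p q
  have hsn : ‖p + q‖ ^ 2 = n ^ 2 - ρ ^ 2 := by
    rw [hs2, hρ2]; simp only [hndef]; ring
  have ht : t ^ 2 ≤ n ^ 2 - ρ ^ 2 := by
    have h1 : |t| ≤ ‖p + q‖ * ‖ω‖ := abs_real_inner_le_norm _ _
    rw [hω, mul_one] at h1
    have := sq_abs t
    nlinarith [norm_nonneg (p + q), abs_nonneg t]
  set c := t / 2 / (n + ρ) with hcdef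
  have hB : ∀ x : R3, ‖(ρ / 2) • ω + c • x‖ ^ 2
      = (ρ / 2) ^ 2 * ‖ω‖ ^ 2 + 2 * ((ρ / 2) * c * ⟪ω, x⟫) + c ^ 2 * ‖x‖ ^ 2 := by
    intro x
    rw [norm_add_sq_real, real_inner_smul_left, real_inner_smul_right,
      norm_smul, norm_smul, Real.norm_eq_abs, Real.norm_eq_abs, mul_pow, mul_pow,
      sq_abs, sq_abs]
    ring
  have hωs : ⟪ω, p + q⟫ = t := by rw [htdef, real_inner_comm]
  have hBval : ‖(ρ / 2) • ω + c • (p + q)‖ ^ 2 = ρ ^ 2 / 4 + t ^ 2 / 4 := by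
    rw [hB, hωs, hω, hsn, hcdef]
    field_simp
    ring
  have hA : ‖(1 / 2 : ℝ) • (p + q)‖ ^ 2 = (n ^ 2 - ρ ^ 2) / 4 := by
    rw [norm_smul, mul_pow, ← hsn]
    simp
    ring
  have hPdef : pPost p q ω = (1 / 2 : ℝ) • (p + q) + ((ρ / 2) • ω + c • (p + q)) := by
    simp only [pPost, ← hρdef, ← htdef, ← hndef, ← hcdef, add_assoc]
  have hQdef : qPost p q ω = (1 / 2 : ℝ) • (p + q) - ((ρ / 2) • ω + c • (p + q)) := by
    simp only [qPost, ← hρdef, ← htdef, ← hndef, ← hcdef, sub_sub]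
  have hsum : ‖pPost p q ω‖ ^ 2 + ‖qPost p q ω‖ ^ 2
      = 2 * ‖(1 / 2 : ℝ) • (p + q)‖ ^ 2 + 2 * ‖(ρ / 2) • ω + c • (p + q)‖ ^ 2 := by
    rw [hPdef, hQdef, norm_add_sq_real, norm_sub_sq_real]; ring
  rw [hsum, hA, hBval]
  have hn2 : n ^ 2 = ‖p‖ ^ 2 + 2 * (‖p‖ * ‖q‖) + ‖q‖ ^ 2 := by
    simp only [hndef]; ring
  nlinarith [sq_nonneg ρ]
end
end

section
/- For any 0 < a < 1 there exists a constant C > 0 such that for all p, q ∈ ℝ³ \ {0} that are not positive scalar multiples of each other (so that ρ(p,q) > 0), one has ∫_{S²} |p'(p,q,ω)|^{−1} dω = ∫_{S²} |q'(p,q,ω)|^{−1} dω ≤ C / ( ρ(p,q)^a (|p|+|q|)^{1−a} ), where dω is the surface measure on the unit sphere S² and p', q' are the post-collision momenta defined by the stated parametrization. -/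
noncomputable section

open MeasureTheory Real Metric
open scoped RealInnerProductSpace

lemma qPost_eq_pPost_neg (p q ω : R3) : qPost p q ω = pPost p q (-ω) := by
  simp only [pPost, qPost, inner_neg_right, smul_neg, neg_div, neg_smul]
  module

section Geometry

variable {p q : R3}

lemma relMom_sq (h : ⟪p, q⟫ ≤ ‖p‖ * ‖q‖) :
    relMom p q ^ 2 = 2 * (‖p‖ * ‖q‖ - ⟪p, q⟫) := by
  rw [relMom, Real.sq_sqrt]; linarith

lemma inner_lt (hp : p ≠ 0) (hq : q ≠ 0) (hc : ∀ c : ℝ, 0 < c → q ≠ c • p) :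
    ⟪p, q⟫ < ‖p‖ * ‖q‖ := by
  rcases lt_or_eq_of_le (real_inner_le_norm p q) with h | h
  · exact h
  · exfalso
    have := (inner_eq_norm_mul_iff_real (x := p) (y := q)).mp h
    have hp' : (0:ℝ) < ‖p‖ := norm_pos_iff.mpr hp
    have hq' : (0:ℝ) < ‖q‖ := norm_pos_iff.mpr hq
    refine hc (‖q‖ / ‖p‖) (by positivity) ?_
    rw [div_eq_inv_mul, mul_smul, this, smul_smul, inv_mul_cancel₀ hp'.ne', one_smul]

lemma relMom_pos (h : ⟪p, q⟫ < ‖p‖ * ‖q‖) : 0 < relMom p q :=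
  Real.sqrt_pos.mpr (by linarith)

lemma inner_sum_self (p q : R3) (h : ⟪p, q⟫ ≤ ‖p‖ * ‖q‖) :
    ⟪p + q, p + q⟫ = (‖p‖ + ‖q‖) ^ 2 - relMom p q ^ 2 := by
  rw [relMom_sq h, real_inner_add_add_self, real_inner_self_eq_norm_sq,
    real_inner_self_eq_norm_sq]
  ring

lemma norm_sum_sq (p q : R3) (h : ⟪p, q⟫ ≤ ‖p‖ * ‖q‖) :
    ‖p + q‖ ^ 2 = (‖p‖ + ‖q‖) ^ 2 - relMom p q ^ 2 := by
  rw [← real_inner_self_eq_norm_sq, inner_sum_self p q h]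

lemma norm_sum_lt (hp : p ≠ 0) (hq : q ≠ 0) (h : ⟪p, q⟫ < ‖p‖ * ‖q‖) :
    ‖p + q‖ < ‖p‖ + ‖q‖ := by
  have h1 := norm_sum_sq p q h.le
  have h2 : 0 < relMom p q := relMom_pos h
  have hs : (0:ℝ) < ‖p‖ + ‖q‖ := by
    have : (0:ℝ) < ‖p‖ := norm_pos_iff.mpr hp
    have : (0:ℝ) < ‖q‖ := norm_pos_iff.mpr hq
    linarith
  nlinarith [norm_nonneg (p + q), sq_nonneg (relMom p q)]

lemma relMom_le (p q : R3) (h : ⟪p, q⟫ ≤ ‖p‖ * ‖q‖) :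
    relMom p q ≤ ‖p‖ + ‖q‖ := by
  have h1 := norm_sum_sq p q h
  have h2 : 0 ≤ relMom p q := Real.sqrt_nonneg _
  nlinarith [sq_nonneg (‖p + q‖), norm_nonneg p, norm_nonneg q]

lemma norm_pPost (hp : p ≠ 0) (hq : q ≠ 0) (h : ⟪p, q⟫ < ‖p‖ * ‖q‖)
    {ω : R3} (hω : ‖ω‖ = 1) :
    ‖pPost p q ω‖ = (‖p‖ + ‖q‖ + ⟪p + q, ω⟫) / 2 := by
  have hρ : 0 < relMom p q := relMom_pos h
  have hp' : (0:ℝ) < ‖p‖ := norm_pos_iff.mpr hp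
  have hq' : (0:ℝ) < ‖q‖ := norm_pos_iff.mpr hq
  have hs : (0:ℝ) < ‖p‖ + ‖q‖ := by linarith
  have hsρ : ‖p‖ + ‖q‖ + relMom p q ≠ 0 := by positivity
  have htr : |⟪p + q, ω⟫| ≤ ‖p + q‖ := by
    simpa [hω] using abs_real_inner_le_norm (p + q) ω
  have hlt : ‖p + q‖ < ‖p‖ + ‖q‖ := norm_sum_lt hp hq h
  have hst : 0 < ‖p‖ + ‖q‖ + ⟪p + q, ω⟫ := by
    have := abs_le.mp htr
    linarith [this.1]
  have hx : pPost p q ω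
      = ((1/2 : ℝ) + ⟪p + q, ω⟫/2/(‖p‖ + ‖q‖ + relMom p q)) • (p + q)
        + (relMom p q/2) • ω := by
    rw [pPost]; module
  have hsq : ‖pPost p q ω‖ ^ 2 = ((‖p‖ + ‖q‖ + ⟪p + q, ω⟫) / 2) ^ 2 := by
    rw [hx, norm_add_sq_real, real_inner_smul_left, real_inner_smul_right,
      norm_smul, norm_smul, hω, Real.norm_eq_abs, Real.norm_eq_abs,
      mul_pow, mul_pow, sq_abs, sq_abs, norm_sum_sq p q h.le]
    generalize hT : ⟪p + q, ω⟫ = T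
    generalize hS : ‖p‖ + ‖q‖ = S at hsρ ⊢
    generalize hR : relMom p q = R at hsρ ⊢
    field_simp
    ring
  have h1 : ‖pPost p q ω‖ = Real.sqrt (((‖p‖ + ‖q‖ + ⟪p + q, ω⟫) / 2) ^ 2) := by
    rw [← hsq, Real.sqrt_sq (norm_nonneg _)]
  rw [h1, Real.sqrt_sq (by linarith)]

lemma norm_qPost (hp : p ≠ 0) (hq : q ≠ 0) (h : ⟪p, q⟫ < ‖p‖ * ‖q‖)
    {ω : R3} (hω : ‖ω‖ = 1) :
    ‖qPost p q ω‖ = (‖p‖ + ‖q‖ - ⟪p + q, ω⟫) / 2 := by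
  rw [qPost_eq_pPost_neg, norm_pPost hp hq h (ω := -ω) (by simpa using hω), inner_neg_right]
  ring_nf

end Geometry

section SphereMeasure

open Set
open scoped Pointwise ENNReal

lemma euclid_norm_sq (x : EuclideanSpace ℝ (Fin 3)) : ‖x‖ ^ 2 = ∑ i, x i ^ 2 := by
  rw [EuclideanSpace.norm_eq, Real.sq_sqrt (by positivity)]
  congr 1; ext i; rw [Real.norm_eq_abs, sq_abs]

lemma euclid_abs_coord_le (x : EuclideanSpace ℝ (Fin 3)) (i : Fin 3) : |x i| ≤ ‖x‖ := by
  have h : x i ^ 2 ≤ ‖x‖ ^ 2 := by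
    rw [euclid_norm_sq]
    exact Finset.single_le_sum (fun j _ => sq_nonneg (x j)) (Finset.mem_univ i)
  calc |x i| = Real.sqrt (x i ^ 2) := (Real.sqrt_sq_eq_abs _).symm
  _ ≤ Real.sqrt (‖x‖ ^ 2) := Real.sqrt_le_sqrt h
  _ = ‖x‖ := by rw [Real.sqrt_sq (norm_nonneg _)]

/-- the box `{y : |y i| ≤ m i}` as a subset of Euclidean space -/
def euclidBox (m : Fin 3 → ℝ) : Set (EuclideanSpace ℝ (Fin 3)) :=
  ((MeasurableEquiv.toLp 2 (Fin 3 → ℝ)).symm) ⁻¹' (Set.pi Set.univ fun i => Set.Icc (-(m i)) (m i))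

lemma mem_euclidBox {m : Fin 3 → ℝ} {x : EuclideanSpace ℝ (Fin 3)} :
    x ∈ euclidBox m ↔ ∀ i, |x i| ≤ m i := by
  simp only [euclidBox, Set.mem_preimage, Set.mem_pi, Set.mem_univ, true_implies,
    Set.mem_Icc, abs_le]
  rfl

lemma volume_euclidBox (m : Fin 3 → ℝ) :
    volume (euclidBox m) = ∏ i, ENNReal.ofReal (2 * m i) := by
  rw [euclidBox, (EuclideanSpace.volume_preserving_symm_measurableEquiv_toLp (Fin 3)).measure_preimage
    ((MeasurableSet.univ_pi fun i => measurableSet_Icc).nullMeasurableSet)]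
  rw [volume_pi_pi]
  congr 1; ext i; rw [Real.volume_Icc]; congr 1; ring

lemma volume_box_pre (m : Fin 3 → ℝ) (e : OrthonormalBasis (Fin 3) ℝ R3) :
    volume ((fun x => e.repr x) ⁻¹' euclidBox m) = ∏ i, ENNReal.ofReal (2 * m i) := by
  rw [e.measurePreserving_repr.measure_preimage, volume_euclidBox]
  exact ((MeasurableSet.univ_pi fun i => measurableSet_Icc).preimage
    ((MeasurableEquiv.toLp 2 (Fin 3 → ℝ)).symm).measurable).nullMeasurableSet

lemma finrank_R3 : Module.finrank ℝ R3 = 3 := finrank_euclideanSpace_fin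

set_option maxHeartbeats 1000000 in
lemma sphMeasure_univ_le : sphMeasure Set.univ ≤ ENNReal.ofReal 24 := by
  rw [sphMeasure, Measure.toSphere_apply' _ MeasurableSet.univ, finrank_R3]
  have hsub : Set.Ioo (0:ℝ) 1 • ((↑) '' (Set.univ : Set (sphere (0:R3) 1)))
      ⊆ euclidBox (fun _ => 1) := by
    rintro x hx
    rw [Set.mem_smul] at hx
    obtain ⟨c, hc, y, hy, rfl⟩ := hx
    obtain ⟨ω, -, rfl⟩ := hy
    have hω : ‖(ω : R3)‖ = 1 := mem_sphere_zero_iff_norm.mp ω.2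
    have hnx : ‖c • (ω : R3)‖ ≤ 1 := by
      rw [norm_smul, hω, Real.norm_eq_abs, mul_one, abs_of_pos hc.1]
      exact hc.2.le
    rw [mem_euclidBox]
    intro i
    exact (euclid_abs_coord_le _ i).trans hnx
  refine le_trans (mul_le_mul_right (measure_mono hsub) _) ?_
  rw [volume_euclidBox]
  refine le_of_eq ?_
  simp only [Fin.prod_univ_three]
  rw [← ENNReal.ofReal_mul (by norm_num), ← ENNReal.ofReal_mul (by norm_num)]
  rw [show ((3:ℕ):ℝ≥0∞) = ENNReal.ofReal 3 by simp, ← ENNReal.ofReal_mul (by norm_num)]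
  norm_num

set_option maxHeartbeats 1000000 in
lemma sphMeasure_cap_le (v : R3) (hv : ‖v‖ = 1) {δ : ℝ} (hδ0 : 0 < δ) (hδ1 : δ ≤ 1) :
    sphMeasure {ω : sphere (0:R3) 1 | ⟪v, (ω : R3)⟫ ≤ -1 + δ} ≤ ENNReal.ofReal (48 * δ) := by
  have hA : MeasurableSet {ω : sphere (0:R3) 1 | ⟪v, (ω : R3)⟫ ≤ -1 + δ} := by
    exact (isClosed_le (Continuous.inner continuous_const continuous_subtype_val)
      continuous_const).measurableSet
  -- an orthonormal basis whose first vector is `v`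
  have hortho : Orthonormal ℝ (({0} : Set (Fin 3)).restrict fun _ : Fin 3 => v) := by
    constructor
    · intro i; exact hv
    · intro i j hij
      exact absurd (Subtype.ext ((Set.mem_singleton_iff.mp i.2).trans
        (Set.mem_singleton_iff.mp j.2).symm)) hij
  obtain ⟨b, hb⟩ := hortho.exists_orthonormalBasis_extension_of_card_eq
    (by simp [finrank_R3])
  have hb0 : b 0 = v := hb 0 rfl
  rw [sphMeasure, Measure.toSphere_apply' _ hA, finrank_R3]
  set m : Fin 3 → ℝ := ![1, Real.sqrt (2 * δ), Real.sqrt (2 * δ)] with hm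
  have hsub : Set.Ioo (0:ℝ) 1 • ((↑) '' {ω : sphere (0:R3) 1 | ⟪v, (ω : R3)⟫ ≤ -1 + δ})
      ⊆ (fun x => b.repr x) ⁻¹' euclidBox m := by
    rintro x hx
    rw [Set.mem_smul] at hx
    obtain ⟨c, hc, y, hy, rfl⟩ := hx
    obtain ⟨ω, hωA, rfl⟩ := hy
    have hω : ‖(ω : R3)‖ = 1 := mem_sphere_zero_iff_norm.mp ω.2
    have hin : ⟪v, (ω : R3)⟫ ≤ -1 + δ := hωA
    have habs : |⟪v, (ω : R3)⟫| ≤ 1 := by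
      simpa [hv, hω] using abs_real_inner_le_norm v (ω : R3)
    have hc0 : 0 < c := hc.1
    have hc1 : c ≤ 1 := hc.2.le
    set z := b.repr (c • (ω : R3)) with hz
    have hz0 : z 0 = c * ⟪v, (ω : R3)⟫ := by
      rw [hz, b.repr_apply_apply, hb0, real_inner_smul_right]
    have hnorm : ∑ i, z i ^ 2 = c ^ 2 := by
      rw [← euclid_norm_sq, hz, b.repr.norm_map, norm_smul, hω, Real.norm_eq_abs,
        mul_one, sq_abs]
    have hzsq : z 1 ^ 2 + z 2 ^ 2 ≤ 2 * δ := by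
      have hsum : z 0 ^ 2 + z 1 ^ 2 + z 2 ^ 2 = c ^ 2 := by
        rw [← hnorm, Fin.sum_univ_three]
      have hlow : c * (1 - δ) ≤ -(z 0) := by
        rw [hz0]; nlinarith
      have h0sq : (c * (1 - δ)) ^ 2 ≤ z 0 ^ 2 := by
        have h1 : 0 ≤ c * (1 - δ) := by nlinarith
        nlinarith
      have hc2 : c ^ 2 ≤ 1 := by nlinarith
      have hkey : (0:ℝ) ≤ (1 - c ^ 2) * (2 * δ - δ ^ 2) :=
        mul_nonneg (by nlinarith) (by nlinarith)
      have e1 : z 1 ^ 2 + z 2 ^ 2 ≤ c ^ 2 - (c * (1 - δ)) ^ 2 := by linarith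
      have e3 : c ^ 2 * (2 * δ - δ ^ 2) ≤ 2 * δ - δ ^ 2 := by nlinarith
      nlinarith [sq_nonneg δ]
    rw [Set.mem_preimage, mem_euclidBox, ← hz]
    intro i
    fin_cases i
    · show |z 0| ≤ 1
      rw [hz0, abs_mul, abs_of_pos hc0]
      have h' : c * |⟪v, (ω : R3)⟫| ≤ c * 1 := mul_le_mul_of_nonneg_left habs hc0.le
      linarith
    · show |z 1| ≤ Real.sqrt (2 * δ)
      rw [← Real.sqrt_sq_eq_abs]
      exact Real.sqrt_le_sqrt (by nlinarith)
    · show |z 2| ≤ Real.sqrt (2 * δ)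
      rw [← Real.sqrt_sq_eq_abs]
      exact Real.sqrt_le_sqrt (by nlinarith)
  refine le_trans (mul_le_mul_right (measure_mono hsub) _) ?_
  rw [volume_box_pre]
  refine le_of_eq ?_
  simp only [Fin.prod_univ_three, hm, Matrix.cons_val_zero, Matrix.cons_val_one,
    Matrix.head_cons, Matrix.cons_val_two, Matrix.tail_cons]
  rw [← ENNReal.ofReal_mul (by positivity), ← ENNReal.ofReal_mul (by positivity)]
  rw [show ((3:ℕ):ℝ≥0∞) = ENNReal.ofReal 3 by simp, ← ENNReal.ofReal_mul (by norm_num)]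
  congr 1
  have : Real.sqrt (2*δ) * Real.sqrt (2*δ) = 2*δ := Real.mul_self_sqrt (by positivity)
  nlinarith

end SphereMeasure

section Antipodal

open Set
open scoped Pointwise ENNReal

lemma neg_mem_sphere' (ω : sphere (0 : R3) 1) : -(ω : R3) ∈ sphere (0 : R3) 1 := by
  rw [mem_sphere_zero_iff_norm, norm_neg, mem_sphere_zero_iff_norm.mp ω.2]

/-- The antipodal homeomorphism of the unit sphere. -/
def sphNeg : sphere (0 : R3) 1 ≃ₜ sphere (0 : R3) 1 where
  toFun ω := ⟨-(ω : R3), neg_mem_sphere' ω⟩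
  invFun ω := ⟨-(ω : R3), neg_mem_sphere' ω⟩
  left_inv ω := by ext; simp
  right_inv ω := by ext; simp
  continuous_toFun := Continuous.subtype_mk (continuous_subtype_val.neg) _
  continuous_invFun := Continuous.subtype_mk (continuous_subtype_val.neg) _

@[simp] lemma sphNeg_coe (ω : sphere (0 : R3) 1) : ((sphNeg ω : sphere (0:R3) 1) : R3) = -(ω : R3) := rfl

lemma sphNeg_sphNeg (ω : sphere (0 : R3) 1) : sphNeg (sphNeg ω) = ω := by
  ext; simp

lemma sphNeg_measurePreserving : MeasurePreserving sphNeg sphMeasure sphMeasure := by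
  refine ⟨sphNeg.continuous.measurable, ?_⟩
  ext s hs
  rw [Measure.map_apply sphNeg.continuous.measurable hs, sphMeasure,
    Measure.toSphere_apply' _ (hs.preimage sphNeg.continuous.measurable),
    Measure.toSphere_apply' _ hs]
  congr 1
  have himg : (Subtype.val '' (sphNeg ⁻¹' s)) = -(Subtype.val '' s) := by
    ext x
    constructor
    · rintro ⟨ω, hω, rfl⟩
      exact Set.mem_neg.mpr ⟨sphNeg ω, hω, by simp⟩
    · intro hx
      obtain ⟨ω, hω, h⟩ := Set.mem_neg.mp hx
      refine ⟨sphNeg ω, ?_, ?_⟩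
      · rw [Set.mem_preimage, sphNeg_sphNeg]; exact hω
      · rw [sphNeg_coe, h, neg_neg]
  rw [himg, Set.smul_neg, Measure.measure_neg]

end Antipodal

open Set
open scoped ENNReal


set_option maxHeartbeats 2000000

/-- **Lemma 4.** For `0 < a < 1` there is `C > 0` with
`∫_{S²} |p'|⁻¹ dω = ∫_{S²} |q'|⁻¹ dω ≤ C / (ρ(p,q)^a (|p|+|q|)^{1-a})`
whenever `p, q ≠ 0` are not positive scalar multiples of each other. -/
theorem sphere_integral_inv_pPost (a : ℝ) (ha0 : 0 < a) (ha1 : a < 1) :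
    ∃ C : ℝ, 0 < C ∧ ∀ p q : R3, p ≠ 0 → q ≠ 0 → (∀ c : ℝ, 0 < c → q ≠ c • p) →
      (∫ ω : sphere (0 : R3) 1, ‖pPost p q (ω : R3)‖⁻¹ ∂sphMeasure)
        = (∫ ω : sphere (0 : R3) 1, ‖qPost p q (ω : R3)‖⁻¹ ∂sphMeasure) ∧
      (∫ ω : sphere (0 : R3) 1, ‖pPost p q (ω : R3)‖⁻¹ ∂sphMeasure)
        ≤ C / (relMom p q ^ a * (‖p‖ + ‖q‖) ^ (1 - a)) := by
  refine ⟨1536 / a + 96, by positivity, ?_⟩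
  intro p q hp hq hcnd
  have h : ⟪p, q⟫ < ‖p‖ * ‖q‖ := inner_lt hp hq hcnd
  have hρ : 0 < relMom p q := relMom_pos h
  have hp' : (0:ℝ) < ‖p‖ := norm_pos_iff.mpr hp
  have hq' : (0:ℝ) < ‖q‖ := norm_pos_iff.mpr hq
  have hs : (0:ℝ) < ‖p‖ + ‖q‖ := by linarith
  have hrlt : ‖p + q‖ < ‖p‖ + ‖q‖ := norm_sum_lt hp hq h
  have hr0 : (0:ℝ) ≤ ‖p + q‖ := norm_nonneg _
  have hρle : relMom p q ≤ ‖p‖ + ‖q‖ := relMom_le p q h.le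
  set F : sphere (0:R3) 1 → ℝ :=
    fun ω => ((‖p‖ + ‖q‖ + ⟪p + q, (ω : R3)⟫) / 2)⁻¹ with hF
  have htle : ∀ ω : sphere (0:R3) 1, |⟪p + q, (ω:R3)⟫| ≤ ‖p + q‖ := fun ω => by
    simpa [mem_sphere_zero_iff_norm.mp ω.2] using abs_real_inner_le_norm (p+q) (ω:R3)
  have hpos : ∀ ω : sphere (0:R3) 1, 0 < (‖p‖ + ‖q‖ + ⟪p + q, (ω:R3)⟫) / 2 := fun ω => by
    have := abs_le.mp (htle ω); linarith [this.1]
  have e1 : (∫ ω : sphere (0:R3) 1, ‖pPost p q (ω:R3)‖⁻¹ ∂sphMeasure)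
      = ∫ ω, F ω ∂sphMeasure := by
    refine integral_congr_ae (Filter.Eventually.of_forall fun ω => ?_)
    show ‖pPost p q (ω:R3)‖⁻¹ = F ω
    rw [norm_pPost hp hq h (mem_sphere_zero_iff_norm.mp ω.2)]
  have e2 : (∫ ω : sphere (0:R3) 1, ‖qPost p q (ω:R3)‖⁻¹ ∂sphMeasure)
      = ∫ ω, F (sphNeg ω) ∂sphMeasure := by
    refine integral_congr_ae (Filter.Eventually.of_forall fun ω => ?_)
    show ‖qPost p q (ω:R3)‖⁻¹ = F (sphNeg ω)
    rw [norm_qPost hp hq h (mem_sphere_zero_iff_norm.mp ω.2)]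
    simp only [hF, sphNeg_coe, inner_neg_right]
    ring_nf
  have e3 : ∫ ω, F (sphNeg ω) ∂sphMeasure = ∫ ω, F ω ∂sphMeasure :=
    sphNeg_measurePreserving.integral_comp sphNeg.measurableEmbedding F
  refine ⟨by rw [e1, e2, e3], ?_⟩
  rw [e1]
  -- continuity, measurability, layer cake
  have hFc : Continuous F := by
    rw [hF]
    exact Continuous.inv₀
      ((continuous_const.add (Continuous.inner continuous_const continuous_subtype_val)).div_const 2)
      fun ω => (hpos ω).ne'
  have hFnn : ∀ ω, 0 ≤ F ω := fun ω => le_of_lt (by rw [hF]; exact inv_pos.mpr (hpos ω))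
  have hint : ∫ ω, F ω ∂sphMeasure
      = (∫⁻ ω, ENNReal.ofReal (F ω) ∂sphMeasure).toReal :=
    integral_eq_lintegral_of_nonneg_ae (Filter.Eventually.of_forall hFnn)
      hFc.aestronglyMeasurable
  have hlayer : ∫⁻ ω, ENNReal.ofReal (F ω) ∂sphMeasure
      = ∫⁻ t in Set.Ioi (0:ℝ), sphMeasure {ω | t < F ω} :=
    lintegral_eq_lintegral_meas_lt _ (Filter.Eventually.of_forall hFnn)
      hFc.measurable.aemeasurable
  have hpow_le : relMom p q ^ a * (‖p‖ + ‖q‖) ^ (1 - a) ≤ ‖p‖ + ‖q‖ := by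
    have h1 : relMom p q ^ a ≤ (‖p‖ + ‖q‖) ^ a := Real.rpow_le_rpow hρ.le hρle ha0.le
    calc relMom p q ^ a * (‖p‖ + ‖q‖) ^ (1 - a)
        ≤ (‖p‖ + ‖q‖) ^ a * (‖p‖ + ‖q‖) ^ (1 - a) :=
          mul_le_mul_of_nonneg_right h1 (Real.rpow_nonneg hs.le _)
      _ = ‖p‖ + ‖q‖ := by
          rw [← Real.rpow_add hs, show a + (1 - a) = 1 by ring, Real.rpow_one]
  rcases le_or_gt (‖p + q‖) ((‖p‖ + ‖q‖) / 2) with hcase | hcase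
  · -- r ≤ s/2 : pointwise bound
    have hbd : ∀ ω, F ω ≤ ((‖p‖ + ‖q‖) / 4)⁻¹ := fun ω => by
      rw [hF]
      refine inv_anti₀ (by positivity) ?_
      have := abs_le.mp (htle ω); linarith [this.1]
    have hL : (∫⁻ ω, ENNReal.ofReal (F ω) ∂sphMeasure)
        ≤ ENNReal.ofReal (((‖p‖ + ‖q‖) / 4)⁻¹ * 24) := by
      calc (∫⁻ ω, ENNReal.ofReal (F ω) ∂sphMeasure)
          ≤ ∫⁻ _ω, ENNReal.ofReal (((‖p‖ + ‖q‖) / 4)⁻¹) ∂sphMeasure :=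
            lintegral_mono fun ω => ENNReal.ofReal_le_ofReal (hbd ω)
        _ = ENNReal.ofReal (((‖p‖ + ‖q‖) / 4)⁻¹) * sphMeasure Set.univ := lintegral_const _
        _ ≤ ENNReal.ofReal (((‖p‖ + ‖q‖) / 4)⁻¹) * ENNReal.ofReal 24 :=
            mul_le_mul_right sphMeasure_univ_le _
        _ = ENNReal.ofReal (((‖p‖ + ‖q‖) / 4)⁻¹ * 24) :=
            (ENNReal.ofReal_mul (by positivity)).symm
    have hIF : ∫ ω, F ω ∂sphMeasure ≤ ((‖p‖ + ‖q‖) / 4)⁻¹ * 24 := by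
      rw [hint]
      have := ENNReal.toReal_mono ENNReal.ofReal_ne_top hL
      rwa [ENNReal.toReal_ofReal (by positivity)] at this
    have hval : ((‖p‖ + ‖q‖) / 4)⁻¹ * 24 = 96 / (‖p‖ + ‖q‖) := by
      rw [inv_div]; ring
    refine hIF.trans ?_
    rw [hval]
    refine div_le_div₀ (by positivity) ?_ (by positivity) hpow_le
    have : 0 < 1536 / a := by positivity
    linarith
  · -- s/2 < r : layer cake estimate
    set r : ℝ := ‖p + q‖ with hrdef
    set s : ℝ := ‖p‖ + ‖q‖ with hsdef
    have hr' : 0 < r := lt_of_le_of_lt (by positivity) hcase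
    set T : ℝ := 2 / (s - r) with hTdef
    have hsr : 0 < s - r := by simp only [hsdef, hrdef]; linarith
    have hT : 0 < T := by positivity
    set e : ℝ := a / 2 - 1 with hedef
    have he1 : (-1:ℝ) < e := by simp only [hedef]; linarith
    have he0 : e < 0 := by simp only [hedef]; linarith
    -- pointwise bound on the measure of superlevel sets
    have hmeas : ∀ t ∈ Set.Ioi (0:ℝ), sphMeasure {ω | t < F ω}
        ≤ Set.indicator (Set.Ioo 0 T) (fun t => ENNReal.ofReal (96 * r ^ e * t ^ e)) t := by
      intro t ht
      rw [Set.mem_Ioi] at ht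
      by_cases htT : t < T
      · rw [Set.indicator_of_mem (Set.mem_Ioo.mpr ⟨ht, htT⟩)]
        have hrt : 0 < r * t := by positivity
        have hmul : r ^ e * t ^ e = (r * t) ^ e := (Real.mul_rpow hr'.le ht.le).symm
        rcases le_or_gt (r * t) 2 with hrt2 | hrt2
        · refine le_trans (measure_mono (Set.subset_univ _)) (sphMeasure_univ_le.trans ?_)
          apply ENNReal.ofReal_le_ofReal
          have h2 : (2:ℝ) ^ e ≤ (r * t) ^ e := by
            have h7 : (r * t) ^ (-e) ≤ (2:ℝ) ^ (-e) :=
              Real.rpow_le_rpow hrt.le hrt2 (by linarith)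
            have hA : (r * t) ^ e = ((r * t) ^ (-e))⁻¹ := by
              rw [← Real.rpow_neg hrt.le, neg_neg]
            have hB : (2:ℝ) ^ e = ((2:ℝ) ^ (-e))⁻¹ := by
              rw [← Real.rpow_neg (by norm_num : (0:ℝ) ≤ 2), neg_neg]
            rw [hA, hB]
            exact inv_anti₀ (Real.rpow_pos_of_pos hrt _) h7
          have h3 : (1/2 : ℝ) ≤ (2:ℝ) ^ e := by
            have := Real.rpow_le_rpow_of_exponent_le (by norm_num : (1:ℝ) ≤ 2) he1.le
            rw [show ((2:ℝ) ^ (-1:ℝ)) = 1/2 by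
              rw [Real.rpow_neg_one]; norm_num] at this
            exact this
          rw [mul_assoc, hmul]
          nlinarith
        · -- cap estimate
          set v : R3 := r⁻¹ • (p + q) with hvdef
          have hv : ‖v‖ = 1 := by
            rw [hvdef, norm_smul, Real.norm_eq_abs, abs_inv, abs_of_pos hr',
              ← hrdef, inv_mul_cancel₀ hr'.ne']
          set δ : ℝ := 2 / (r * t) with hδdef
          have hδ0 : 0 < δ := by positivity
          have hδ1 : δ ≤ 1 := by
            rw [hδdef, div_le_one hrt]; linarith
          have hsubcap : {ω | t < F ω} ⊆ {ω : sphere (0:R3) 1 | ⟪v, (ω:R3)⟫ ≤ -1 + δ} := by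
            intro ω hω
            rw [Set.mem_setOf_eq] at hω ⊢
            have hx : 0 < (s + ⟪p + q, (ω:R3)⟫) / 2 := hpos ω
            have h4 : (s + ⟪p + q, (ω:R3)⟫) / 2 < 1 / t := by
              rw [lt_div_iff₀ ht]
              have h5 : t * ((s + ⟪p + q, (ω:R3)⟫) / 2) <
                  ((s + ⟪p + q, (ω:R3)⟫) / 2)⁻¹ * ((s + ⟪p + q, (ω:R3)⟫) / 2) :=
                mul_lt_mul_of_pos_right hω hx
              rwa [inv_mul_cancel₀ hx.ne', mul_comm] at h5
            have h6 : ⟪p + q, (ω:R3)⟫ < 2 * (1/t) - s := by linarith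
            have h7 : ⟪p + q, (ω:R3)⟫ ≤ (-1 + δ) * r := by
              have hδr : (-1 + δ) * r = 2 * (1/t) - r := by
                rw [hδdef]; field_simp; ring
              rw [hδr]
              have hrs : r < s := hrlt
              linarith
            rw [hvdef, real_inner_smul_left]
            calc r⁻¹ * ⟪p + q, (ω:R3)⟫ ≤ r⁻¹ * ((-1 + δ) * r) :=
                  mul_le_mul_of_nonneg_left h7 (by positivity)
              _ = -1 + δ := by field_simp
          refine le_trans (measure_mono hsubcap) ((sphMeasure_cap_le v hv hδ0 hδ1).trans ?_)
          apply ENNReal.ofReal_le_ofReal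
          have h8 : 48 * δ = 96 * (r * t) ^ (-1 : ℝ) := by
            rw [Real.rpow_neg_one, hδdef]; field_simp; norm_num
          have h9 : (r * t) ^ (-1:ℝ) ≤ (r * t) ^ e :=
            Real.rpow_le_rpow_of_exponent_le (by linarith) he1.le
          rw [h8, mul_assoc, hmul]
          nlinarith
      · -- t ≥ T : the superlevel set is empty
        rw [Set.indicator_of_notMem (fun hmem => htT (Set.mem_Ioo.mp hmem).2)]
        have hempty : {ω | t < F ω} = (∅ : Set (sphere (0:R3) 1)) := by
          ext ω
          simp only [Set.mem_setOf_eq, Set.mem_empty_iff_false, iff_false, not_lt]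
          have hb : (s - r) / 2 ≤ (s + ⟪p + q, (ω:R3)⟫) / 2 := by
            have := abs_le.mp (htle ω); simp only [hsdef, hrdef]; linarith [this.1]
          have h6 : F ω ≤ T := by
            rw [hF, hTdef]
            calc ((s + ⟪p + q, (ω:R3)⟫) / 2)⁻¹ ≤ ((s - r) / 2)⁻¹ :=
                inv_anti₀ (by positivity) hb
              _ = 2 / (s - r) := by rw [inv_div]
          exact h6.trans (not_lt.mp htT)
        rw [hempty, measure_empty]
    -- integrate the bound
    have hii : IntervalIntegrable (fun t : ℝ => t ^ e) volume 0 T :=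
      intervalIntegral.intervalIntegrable_rpow' he1
    have hIntOn : IntegrableOn (fun t : ℝ => 96 * r ^ e * t ^ e) (Set.Ioo 0 T) := by
      have h10 : IntegrableOn (fun t : ℝ => t ^ e) (Set.Ioc 0 T) := by
        have := intervalIntegrable_iff.mp hii
        rwa [Set.uIoc_of_le hT.le] at this
      exact (h10.mono_set Set.Ioo_subset_Ioc_self).const_mul _
    have hval2 : ∫ t in Set.Ioo (0:ℝ) T, 96 * r ^ e * t ^ e
        = 96 * r ^ e * (T ^ (a/2) / (a/2)) := by
      rw [← MeasureTheory.integral_Ioc_eq_integral_Ioo,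
        ← intervalIntegral.integral_of_le hT.le,
        intervalIntegral.integral_const_mul,
        integral_rpow (Or.inl he1)]
      rw [Real.zero_rpow (by linarith : e + 1 ≠ 0),
        show e + 1 = a/2 by rw [hedef]; ring]
      ring
    have hL2 : (∫⁻ t in Set.Ioi (0:ℝ), sphMeasure {ω | t < F ω})
        ≤ ENNReal.ofReal (96 * r ^ e * (T ^ (a/2) / (a/2))) := by
      calc (∫⁻ t in Set.Ioi (0:ℝ), sphMeasure {ω | t < F ω})
          ≤ ∫⁻ t in Set.Ioi (0:ℝ),
              Set.indicator (Set.Ioo 0 T) (fun t => ENNReal.ofReal (96 * r ^ e * t ^ e)) t := by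
            refine lintegral_mono_ae ?_
            filter_upwards [self_mem_ae_restrict measurableSet_Ioi] with t ht
            exact hmeas t ht
        _ = ∫⁻ t in Set.Ioo (0:ℝ) T, ENNReal.ofReal (96 * r ^ e * t ^ e) := by
            rw [lintegral_indicator measurableSet_Ioo,
              Measure.restrict_restrict measurableSet_Ioo,
              Set.inter_eq_left.mpr Set.Ioo_subset_Ioi_self]
        _ = ENNReal.ofReal (∫ t in Set.Ioo (0:ℝ) T, 96 * r ^ e * t ^ e) := by
            refine (ofReal_integral_eq_lintegral_ofReal hIntOn ?_).symm
            filter_upwards [self_mem_ae_restrict measurableSet_Ioo] with t ht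
            have : 0 < t := ht.1
            positivity
        _ = ENNReal.ofReal (96 * r ^ e * (T ^ (a/2) / (a/2))) := by rw [hval2]
    have hIF : ∫ ω, F ω ∂sphMeasure ≤ 96 * r ^ e * (T ^ (a/2) / (a/2)) := by
      rw [hint, hlayer]
      have := ENNReal.toReal_mono ENNReal.ofReal_ne_top hL2
      rwa [ENNReal.toReal_ofReal (by positivity)] at this
    refine hIF.trans ?_
    -- final arithmetic
    have hre : r ^ e ≤ 2 * s ^ e := by
      have h7 : (s/2) ^ (-e) ≤ r ^ (-e) :=
        Real.rpow_le_rpow (by positivity) hcase.le (by linarith)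
      have hA : r ^ e = (r ^ (-e))⁻¹ := by rw [← Real.rpow_neg hr'.le, neg_neg]
      have hB : (s/2) ^ e = ((s/2) ^ (-e))⁻¹ := by
        rw [← Real.rpow_neg (by positivity), neg_neg]
      have h11 : r ^ e ≤ (s/2) ^ e := by
        rw [hA, hB]
        exact inv_anti₀ (Real.rpow_pos_of_pos (by positivity) _) h7
      have h12 : (s/2) ^ e = s ^ e * ((2:ℝ) ^ e)⁻¹ := by
        rw [Real.div_rpow hs.le (by norm_num), div_eq_mul_inv]
      have h13 : ((2:ℝ) ^ e)⁻¹ ≤ 2 := by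
        have h3 : (1/2 : ℝ) ≤ (2:ℝ) ^ e := by
          have := Real.rpow_le_rpow_of_exponent_le (by norm_num : (1:ℝ) ≤ 2) he1.le
          rw [show ((2:ℝ) ^ (-1:ℝ)) = 1/2 by rw [Real.rpow_neg_one]; norm_num] at this
          exact this
        have := inv_anti₀ (by norm_num : (0:ℝ) < 1/2) h3
        rwa [show ((1:ℝ)/2)⁻¹ = 2 by norm_num] at this
      calc r ^ e ≤ s ^ e * ((2:ℝ) ^ e)⁻¹ := by rw [← h12]; exact h11
        _ ≤ s ^ e * 2 := mul_le_mul_of_nonneg_left h13 (Real.rpow_nonneg hs.le _)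
        _ = 2 * s ^ e := by ring
    have hTa : T ^ (a/2) ≤ 2 * (s ^ (a/2) * (relMom p q ^ a)⁻¹) := by
      have hρ2 : relMom p q ^ (2:ℕ) = s ^ (2:ℕ) - r ^ (2:ℕ) := by
        have := norm_sum_sq p q h.le
        rw [hrdef, hsdef]; linarith
      have hT4 : T ≤ 4 * s / relMom p q ^ (2:ℕ) := by
        rw [hTdef, div_le_div_iff₀ hsr (by positivity)]
        nlinarith [hrlt, hr']
      have h14 : T ^ (a/2) ≤ (4 * s / relMom p q ^ (2:ℕ)) ^ (a/2) :=
        Real.rpow_le_rpow hT.le hT4 (by positivity)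
      have h15 : ((4:ℝ) * s / relMom p q ^ (2:ℕ)) ^ (a/2)
          = (4:ℝ) ^ (a/2) * s ^ (a/2) * (relMom p q ^ a)⁻¹ := by
        rw [Real.div_rpow (by positivity) (by positivity),
          Real.mul_rpow (by norm_num) hs.le, div_eq_mul_inv]
        congr 2
        rw [← Real.rpow_natCast (relMom p q) 2, ← Real.rpow_mul hρ.le]
        congr 1
        push_cast
        ring
      have h16 : (4:ℝ) ^ (a/2) ≤ 2 := by
        have h4a : (4:ℝ) ^ (a/2) = (2:ℝ) ^ a := by
          rw [show a/2 = (1/2)*a by ring, Real.rpow_mul (by norm_num : (0:ℝ) ≤ 4)]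
          congr 1
          rw [← Real.sqrt_eq_rpow, show (4:ℝ) = 2^2 by norm_num,
            Real.sqrt_sq (by norm_num : (0:ℝ) ≤ 2)]
        rw [h4a]
        calc (2:ℝ) ^ a ≤ (2:ℝ) ^ (1:ℝ) :=
            Real.rpow_le_rpow_of_exponent_le (by norm_num) ha1.le
          _ = 2 := Real.rpow_one 2
      calc T ^ (a/2) ≤ (4:ℝ) ^ (a/2) * s ^ (a/2) * (relMom p q ^ a)⁻¹ := by
            rw [← h15]; exact h14
        _ ≤ 2 * s ^ (a/2) * (relMom p q ^ a)⁻¹ := by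
            have hpos2 : (0:ℝ) ≤ s ^ (a/2) * (relMom p q ^ a)⁻¹ := by positivity
            nlinarith [Real.rpow_nonneg hs.le (a/2),
              inv_nonneg.mpr (Real.rpow_nonneg hρ.le a)]
        _ = 2 * (s ^ (a/2) * (relMom p q ^ a)⁻¹) := by ring
    have hfinal : 96 * r ^ e * (T ^ (a/2) / (a/2))
        ≤ (768 / a) * (s ^ (1-a))⁻¹ * (relMom p q ^ a)⁻¹ := by
      have hss : s ^ e * s ^ (a/2) = (s ^ (1-a))⁻¹ := by
        rw [← Real.rpow_add hs, show e + a/2 = -(1-a) by rw [hedef]; ring,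
          Real.rpow_neg hs.le]
      calc 96 * r ^ e * (T ^ (a/2) / (a/2))
          = (192 / a) * (r ^ e * T ^ (a/2)) := by field_simp; ring
        _ ≤ (192 / a) * ((2 * s ^ e) * (2 * (s ^ (a/2) * (relMom p q ^ a)⁻¹))) := by
            refine mul_le_mul_of_nonneg_left ?_ (by positivity)
            exact mul_le_mul hre hTa (Real.rpow_nonneg hT.le _)
              (by positivity)
        _ = (768 / a) * (s ^ e * s ^ (a/2)) * (relMom p q ^ a)⁻¹ := by ring
        _ = (768 / a) * (s ^ (1-a))⁻¹ * (relMom p q ^ a)⁻¹ := by rw [hss]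
    refine hfinal.trans ?_
    have h96 : (768:ℝ) / a ≤ 1536 / a + 96 := by
      have h1 : (768:ℝ) / a ≤ 1536 / a := by gcongr <;> norm_num
      linarith
    calc (768 / a) * (s ^ (1-a))⁻¹ * (relMom p q ^ a)⁻¹
        = (768 / a) * ((s ^ (1-a))⁻¹ * (relMom p q ^ a)⁻¹) := by ring
      _ ≤ (1536 / a + 96) * ((s ^ (1-a))⁻¹ * (relMom p q ^ a)⁻¹) :=
          mul_le_mul_of_nonneg_right h96 (by positivity)
      _ = (1536 / a + 96) / (relMom p q ^ a * s ^ (1-a)) := by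
          rw [div_eq_mul_inv (1536 / a + 96) (relMom p q ^ a * s ^ (1-a)), mul_inv]; ring
end
end

section
/- Let p, q ∈ ℝ³ \ {0} and let ω ∈ S² be a unit vector, with post-collision momenta p'⁰, q'⁰, p', q' defined by the stated parametrization. Then the post-collision momenta are null and four-momentum is conserved: |p'| = p'⁰, |q'| = q'⁰, p'⁰ + q'⁰ = |p| + |q|, and (as vectors) p' + q' = p + q. -/
noncomputable section

open MeasureTheory Real Metric
open scoped RealInnerProductSpace

lemma key_alg (s ρ a U : ℝ) (h : s + ρ ≠ 0) (hU : U ^ 2 = s ^ 2 - ρ ^ 2) :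
    (1 / 2 + a / 2 / (s + ρ)) ^ 2 * U ^ 2 + 2 * ((1 / 2 + a / 2 / (s + ρ)) * (ρ / 2)) * a
      + (ρ / 2) ^ 2 * 1 ^ 2 = ((s + a) / 2) ^ 2 := by
  rw [hU]; field_simp; ring

lemma key_alg' (s ρ a U : ℝ) (h : s + ρ ≠ 0) (hU : U ^ 2 = s ^ 2 - ρ ^ 2) :
    (1 / 2 - a / 2 / (s + ρ)) ^ 2 * U ^ 2 + 2 * ((1 / 2 - a / 2 / (s + ρ)) * -(ρ / 2)) * a
      + (-(ρ / 2)) ^ 2 * 1 ^ 2 = ((s - a) / 2) ^ 2 := by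
  rw [hU]; field_simp; ring

lemma norm_comb_sq (u w : R3) (α β : ℝ) :
    ‖α • u + β • w‖ ^ 2 = α ^ 2 * ‖u‖ ^ 2 + 2 * (α * β) * ⟪u, w⟫ + β ^ 2 * ‖w‖ ^ 2 := by
  rw [norm_add_sq_real, norm_smul, norm_smul, real_inner_smul_left, real_inner_smul_right,
    Real.norm_eq_abs, Real.norm_eq_abs, mul_pow, mul_pow, sq_abs, sq_abs]
  ring

/-- The post-collision momenta are null (`|p'| = p'⁰`, `|q'| = q'⁰`) and four-momentum is
conserved: `p'⁰ + q'⁰ = |p| + |q|` and `p' + q' = p + q`. -/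
theorem post_collision_null_and_conserved (p q ω : R3) (hp : p ≠ 0) (hq : q ≠ 0)
    (hω : ‖ω‖ = 1) :
    ‖pPost p q ω‖ = p0Post p q ω ∧ ‖qPost p q ω‖ = q0Post p q ω ∧
    p0Post p q ω + q0Post p q ω = ‖p‖ + ‖q‖ ∧
    pPost p q ω + qPost p q ω = p + q := by
  have hP : 0 < ‖p‖ := norm_pos_iff.mpr hp
  have hQ : 0 < ‖q‖ := norm_pos_iff.mpr hq
  have hcs : ⟪p, q⟫ ≤ ‖p‖ * ‖q‖ := real_inner_le_norm p q
  have hρ0 : 0 ≤ relMom p q := Real.sqrt_nonneg _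
  have hρsq : relMom p q ^ 2 = 2 * (‖p‖ * ‖q‖ - ⟪p, q⟫) := Real.sq_sqrt (by linarith)
  set ρ := relMom p q with hρ_def
  set s := ‖p‖ + ‖q‖ with hs_def
  set a := ⟪p + q, ω⟫ with ha_def
  have hs0 : 0 < s := by positivity
  have hsρ : (0:ℝ) < s + ρ := by linarith
  have hU : ‖p + q‖ ^ 2 = s ^ 2 - ρ ^ 2 := by
    have h1 := norm_add_sq_real p q
    have h2 : s ^ 2 = ‖p‖ ^ 2 + 2 * (‖p‖ * ‖q‖) + ‖q‖ ^ 2 := by rw [hs_def]; ring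
    linarith
  have haU : |a| ≤ ‖p + q‖ := by
    have := abs_real_inner_le_norm (p + q) ω
    rwa [hω, mul_one] at this
  have hUs : ‖p + q‖ ≤ s := by nlinarith [norm_nonneg (p + q)]
  have has : |a| ≤ s := le_trans haU hUs
  have hsa1 : 0 ≤ (s + a) / 2 := by have := abs_le.mp has; linarith [this.1]
  have hsa2 : 0 ≤ (s - a) / 2 := by have := abs_le.mp has; linarith [this.2]
  have keyp : pPost p q ω = ((1 / 2 : ℝ) + a / 2 / (s + ρ)) • (p + q) + (ρ / 2) • ω := by
    rw [pPost, ← hρ_def, ← hs_def, ← ha_def]; module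
  have keyq : qPost p q ω = ((1 / 2 : ℝ) - a / 2 / (s + ρ)) • (p + q) + (-(ρ / 2)) • ω := by
    rw [qPost, ← hρ_def, ← hs_def, ← ha_def]; module
  have hnp : ‖pPost p q ω‖ ^ 2 = ((s + a) / 2) ^ 2 := by
    rw [keyp, norm_comb_sq, hω]
    exact key_alg s ρ a _ hsρ.ne' hU
  have hnq : ‖qPost p q ω‖ ^ 2 = ((s - a) / 2) ^ 2 := by
    rw [keyq, norm_comb_sq, hω]
    exact key_alg' s ρ a _ hsρ.ne' hU
  refine ⟨?_, ?_, ?_, ?_⟩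
  · rw [← Real.sqrt_sq (norm_nonneg _), hnp, Real.sqrt_sq hsa1, p0Post, ← hs_def, ← ha_def]
    ring
  · rw [← Real.sqrt_sq (norm_nonneg _), hnq, Real.sqrt_sq hsa2, q0Post, ← hs_def, ← ha_def]
    ring
  · rw [p0Post, q0Post]; ring
  · rw [pPost, qPost]; module
end
end

section
/- Let p, q ∈ ℝ³ \ {0} and let ω ∈ S² be a unit vector, with post-collision momenta p', q' defined by the stated parametrization. Then the relative momentum is a collision invariant: |p'||q'| − p'·q' = |p||q| − p·q, i.e. ρ(p',q') = ρ(p,q). -/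
noncomputable section

open MeasureTheory Real Metric
open scoped RealInnerProductSpace

set_option maxHeartbeats 1600000 in
/-- The relative momentum is a collision invariant:
`|p'||q'| − p'·q' = |p||q| − p·q`, i.e. `ρ(p',q') = ρ(p,q)`. -/
theorem relMom_collision_invariant (p q ω : R3) (hp : p ≠ 0) (hq : q ≠ 0) (hω : ‖ω‖ = 1) :
    ‖pPost p q ω‖ * ‖qPost p q ω‖ - ⟪pPost p q ω, qPost p q ω⟫ = ‖p‖ * ‖q‖ - ⟪p, q⟫ ∧
    relMom (pPost p q ω) (qPost p q ω) = relMom p q := by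
  have hCS : ⟪p, q⟫ ≤ ‖p‖ * ‖q‖ := real_inner_le_norm p q
  set s : ℝ := ‖p‖ + ‖q‖ with hs
  set ρ : ℝ := relMom p q with hρdef
  set a : ℝ := ⟪p + q, ω⟫ with ha
  have hρ0 : 0 ≤ ρ := Real.sqrt_nonneg _
  have hρsq : ρ ^ 2 = 2 * (‖p‖ * ‖q‖ - ⟪p, q⟫) := by
    rw [hρdef, relMom, sq_sqrt (by linarith)]
  have hωω : ⟪ω, ω⟫ = 1 := by
    rw [real_inner_self_eq_norm_sq, hω]; norm_num
  have hPP : ⟪p + q, (p + q : R3)⟫ = s ^ 2 - ρ ^ 2 := by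
    rw [hρsq, real_inner_self_eq_norm_sq, hs]
    have := norm_add_sq_real p q
    nlinarith [this]
  have hsp : 0 < s := by
    have := norm_pos_iff.mpr hp
    have := norm_nonneg q
    rw [hs]; linarith
  have hsρ : 0 < s + ρ := by linarith
  have hne : s + ρ ≠ 0 := ne_of_gt hsρ
  have ha_le : |a| ≤ s := by
    have h1 : |a| ≤ ‖p + q‖ * ‖ω‖ := abs_real_inner_le_norm _ _
    have h2 : ‖p + q‖ ≤ ‖p‖ + ‖q‖ := norm_add_le p q
    rw [hω, mul_one] at h1
    exact h1.trans h2
  obtain ⟨ha1, ha2⟩ := abs_le.mp ha_le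
  have hpq' : ⟪pPost p q ω, qPost p q ω⟫ = (s ^ 2 - 2 * ρ ^ 2 - a ^ 2) / 4 := by
    rw [pPost, qPost]
    set P : R3 := p + q with hP
    simp only [inner_add_left, inner_add_right, inner_sub_left, inner_sub_right,
      real_inner_smul_left, real_inner_smul_right]
    have ha' : ⟪ω, P⟫ = a := by rw [ha, real_inner_comm]
    simp only [hPP, hωω, ha', ← ha, ← hρdef, ← hs]
    field_simp
    ring
  have hpp' : ⟪pPost p q ω, pPost p q ω⟫ = ((s + a) / 2) ^ 2 := by
    rw [pPost]
    set P : R3 := p + q with hP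
    simp only [inner_add_left, inner_add_right, real_inner_smul_left, real_inner_smul_right]
    have ha' : ⟪ω, P⟫ = a := by rw [ha, real_inner_comm]
    simp only [hPP, hωω, ha', ← ha, ← hρdef, ← hs]
    field_simp
    ring
  have hqq' : ⟪qPost p q ω, qPost p q ω⟫ = ((s - a) / 2) ^ 2 := by
    rw [qPost]
    set P : R3 := p + q with hP
    simp only [inner_sub_left, inner_sub_right, inner_add_left, inner_add_right,
      real_inner_smul_left, real_inner_smul_right]
    have ha' : ⟪ω, P⟫ = a := by rw [ha, real_inner_comm]
    simp only [hPP, hωω, ha', ← ha, ← hρdef, ← hs]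
    field_simp
    ring
  have hnp : ‖pPost p q ω‖ = (s + a) / 2 := by
    have h : ‖pPost p q ω‖ ^ 2 = ((s + a) / 2) ^ 2 := by
      rw [← real_inner_self_eq_norm_sq, hpp']
    calc ‖pPost p q ω‖ = Real.sqrt (‖pPost p q ω‖ ^ 2) :=
          (Real.sqrt_sq (norm_nonneg _)).symm
      _ = Real.sqrt (((s + a) / 2) ^ 2) := by rw [h]
      _ = (s + a) / 2 := Real.sqrt_sq (by linarith)
  have hnq : ‖qPost p q ω‖ = (s - a) / 2 := by
    have h : ‖qPost p q ω‖ ^ 2 = ((s - a) / 2) ^ 2 := by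
      rw [← real_inner_self_eq_norm_sq, hqq']
    calc ‖qPost p q ω‖ = Real.sqrt (‖qPost p q ω‖ ^ 2) :=
          (Real.sqrt_sq (norm_nonneg _)).symm
      _ = Real.sqrt (((s - a) / 2) ^ 2) := by rw [h]
      _ = (s - a) / 2 := Real.sqrt_sq (by linarith)
  have key : ‖pPost p q ω‖ * ‖qPost p q ω‖ - ⟪pPost p q ω, qPost p q ω⟫
      = ‖p‖ * ‖q‖ - ⟪p, q⟫ := by
    rw [hnp, hnq, hpq']
    nlinarith [hρsq]
  refine ⟨key, ?_⟩
  rw [relMom, key, hρdef, relMom]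
end
end

section
/- Let H > 0 and C₂ > 0. Then the total conformal time of the spatially flat FLRW spacetime with scale factor R(t) = C₂ √(sinh(2Ht)) is finite: ∫₀^∞ dt / (C₂ √(sinh(2Ht))) = (√2/(C₂ H)) ∫₁^∞ dx / √(x⁴ − 1), and this quantity is finite. -/
open Real MeasureTheory Set

lemma g_integrable : IntegrableOn (fun x : ℝ => (Real.sqrt (x ^ 4 - 1))⁻¹) (Set.Ioi 1) := by
  have hmeas : ∀ s : Set ℝ, AEStronglyMeasurable (fun x : ℝ => (Real.sqrt (x ^ 4 - 1))⁻¹)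
      (volume.restrict s) := fun s =>
    ((Real.continuous_sqrt.comp (by continuity)).measurable.inv).aestronglyMeasurable
  have h12 : IntegrableOn (fun x : ℝ => (Real.sqrt (x ^ 4 - 1))⁻¹) (Set.Ioc 1 2) := by
    have hbase : IntervalIntegrable (fun x : ℝ => x ^ (-(1/2) : ℝ)) volume 0 1 :=
      intervalIntegral.intervalIntegrable_rpow' (by norm_num)
    have hshift : IntervalIntegrable (fun x : ℝ => (x - 1) ^ (-(1/2) : ℝ)) volume 1 2 := by
      have := hbase.comp_sub_right 1
      norm_num at this
      exact this
    have hint : IntegrableOn (fun x : ℝ => (x - 1) ^ (-(1/2) : ℝ)) (Set.Ioc 1 2) :=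
      (intervalIntegrable_iff_integrableOn_Ioc_of_le (by norm_num)).mp hshift
    refine hint.mono' (hmeas _) ?_
    filter_upwards [ae_restrict_mem measurableSet_Ioc] with x hx
    obtain ⟨hx1, _⟩ := hx
    have hx1' : (0:ℝ) < x - 1 := by linarith
    have hfac : (x - 1) ≤ x ^ 4 - 1 := by nlinarith [sq_nonneg x, sq_nonneg (x+1), sq_nonneg (x-1), sq_nonneg (x^2-1)]
    have h0 : Real.sqrt (x - 1) ≤ Real.sqrt (x ^ 4 - 1) := Real.sqrt_le_sqrt hfac
    have hs : 0 < Real.sqrt (x - 1) := Real.sqrt_pos.mpr hx1'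
    rw [Real.norm_eq_abs, abs_of_nonneg (inv_nonneg.mpr (Real.sqrt_nonneg _))]
    have hrw : (x - 1) ^ (-(1/2) : ℝ) = (Real.sqrt (x - 1))⁻¹ := by
      rw [Real.rpow_neg hx1'.le, Real.sqrt_eq_rpow]
    rw [hrw]
    exact inv_anti₀ hs h0
  have h2i : IntegrableOn (fun x : ℝ => (Real.sqrt (x ^ 4 - 1))⁻¹) (Set.Ioi 2) := by
    have hint : IntegrableOn (fun x : ℝ => Real.sqrt 2 * x ^ (-2 : ℝ)) (Set.Ioi 2) :=
      (integrableOn_Ioi_rpow_of_lt (by norm_num) (by norm_num)).const_mul _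
    refine hint.mono' (hmeas _) ?_
    filter_upwards [ae_restrict_mem measurableSet_Ioi] with x hx
    have hx2 : (2:ℝ) < x := hx
    have hx0 : (0:ℝ) < x := by linarith
    have hfac : x ^ 4 / 2 ≤ x ^ 4 - 1 := by nlinarith [sq_nonneg x, sq_nonneg (x^2), pow_le_pow_left₀ (by norm_num : (0:ℝ) ≤ 2) hx2.le 4]
    have hpos : (0:ℝ) < x ^ 4 / 2 := by positivity
    have h0 : Real.sqrt (x ^ 4 / 2) ≤ Real.sqrt (x ^ 4 - 1) := Real.sqrt_le_sqrt hfac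
    have hs : 0 < Real.sqrt (x ^ 4 / 2) := Real.sqrt_pos.mpr hpos
    rw [Real.norm_eq_abs, abs_of_nonneg (inv_nonneg.mpr (Real.sqrt_nonneg _))]
    have key : (Real.sqrt (x ^ 4 / 2))⁻¹ = Real.sqrt 2 * x ^ (-2 : ℝ) := by
      have h4 : Real.sqrt (x ^ 4) = x ^ 2 := by
        rw [show x ^ 4 = (x ^ 2) ^ 2 by ring, Real.sqrt_sq (by positivity)]
      have hxr : x ^ (-2 : ℝ) = (x ^ 2)⁻¹ := by
        rw [Real.rpow_neg hx0.le]
        congr 1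
        rw [show (2:ℝ) = ((2:ℕ):ℝ) by norm_num, Real.rpow_natCast]
      rw [Real.sqrt_div (by positivity : (0:ℝ) ≤ x ^ 4), h4, inv_div, hxr, div_eq_mul_inv]
    calc (Real.sqrt (x ^ 4 - 1))⁻¹ ≤ (Real.sqrt (x ^ 4 / 2))⁻¹ := inv_anti₀ hs h0
      _ = Real.sqrt 2 * x ^ (-2 : ℝ) := key
  have : Set.Ioi (1:ℝ) = Set.Ioc 1 2 ∪ Set.Ioi 2 := by
    rw [Set.Ioc_union_Ioi_eq_Ioi]; norm_num
  rw [this]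
  exact h12.union h2i

/-- The total conformal time of the flat FLRW spacetime with `R(t) = C₂ √(sinh 2Ht)` is
finite and equals `(√2/(C₂H)) ∫₁^∞ dx/√(x⁴−1)`. -/
theorem total_conformal_time_finite (H C₂ : ℝ) (hH : 0 < H) (hC : 0 < C₂) :
    IntegrableOn (fun t : ℝ => (C₂ * Real.sqrt (Real.sinh (2 * H * t)))⁻¹) (Set.Ioi 0) ∧
    IntegrableOn (fun x : ℝ => (Real.sqrt (x ^ 4 - 1))⁻¹) (Set.Ioi 1) ∧
    (∫ t in Set.Ioi (0 : ℝ), (C₂ * Real.sqrt (Real.sinh (2 * H * t)))⁻¹)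
      = Real.sqrt 2 / (C₂ * H) * ∫ x in Set.Ioi (1 : ℝ), (Real.sqrt (x ^ 4 - 1))⁻¹ := by
  set g : ℝ → ℝ := fun x => (Real.sqrt (x ^ 4 - 1))⁻¹ with hg
  set f : ℝ → ℝ := fun t => Real.exp (H * t) with hf
  have hderiv : ∀ t ∈ Set.Ioi (0:ℝ),
      HasDerivWithinAt f (H * Real.exp (H * t)) (Set.Ioi 0) t := by
    intro t _
    have h1 : HasDerivAt (fun t : ℝ => H * t) H t := by
      simpa using (hasDerivAt_id t).const_mul H
    have h2 : HasDerivAt f (Real.exp (H * t) * H) t := h1.exp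
    simpa [mul_comm] using h2.hasDerivWithinAt
  have hinj : Set.InjOn f (Set.Ioi 0) := by
    intro a _ b _ hab
    have := Real.exp_injective hab
    exact mul_left_cancel₀ hH.ne' this
  have himg : f '' Set.Ioi 0 = Set.Ioi 1 := by
    ext x
    constructor
    · rintro ⟨t, ht, rfl⟩
      have : (0:ℝ) < H * t := mul_pos hH ht
      simpa using Real.exp_lt_exp.mpr this |>.trans_le' (by simp [Real.exp_zero])
    · intro hx
      have hx1 : (1:ℝ) < x := hx
      refine ⟨Real.log x / H, ?_, ?_⟩
      · exact div_pos (Real.log_pos hx1) hH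
      · simp only [hf]
        rw [mul_div_cancel₀ _ hH.ne', Real.exp_log (by linarith)]
  have hCV := integral_image_eq_integral_abs_deriv_smul measurableSet_Ioi hderiv hinj g
  have hIff := integrableOn_image_iff_integrableOn_abs_deriv_smul measurableSet_Ioi hderiv hinj g
  rw [himg] at hCV hIff
  have hInt2 : IntegrableOn (fun t => |H * Real.exp (H * t)| • g (f t)) (Set.Ioi 0) :=
    hIff.mp g_integrable
  have hkey : ∀ t ∈ Set.Ioi (0:ℝ),
      (C₂ * Real.sqrt (Real.sinh (2 * H * t)))⁻¹
        = Real.sqrt 2 / (C₂ * H) * (|H * Real.exp (H * t)| • g (f t)) := by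
    intro t ht
    have ht0 : (0:ℝ) < t := ht
    have he : (0:ℝ) < Real.exp (H * t) := Real.exp_pos _
    have hE2 : Real.exp (2 * H * t) = Real.exp (H * t) ^ 2 := by
      rw [← Real.exp_nat_mul]; ring_nf
    have hE4 : Real.exp (H * t) ^ 4 = Real.exp (2 * H * t) * Real.exp (2 * H * t) := by
      rw [← Real.exp_add, ← Real.exp_nat_mul]; ring_nf
    have hE4pos : (1:ℝ) < Real.exp (H * t) ^ 4 := by
      rw [← Real.exp_nat_mul]
      have h0 : (0:ℝ) < (4:ℕ) * (H * t) := by positivity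
      calc (1:ℝ) = Real.exp 0 := Real.exp_zero.symm
        _ < _ := Real.exp_lt_exp.mpr h0
    have hsinh : Real.sinh (2 * H * t)
        = (Real.exp (H * t) ^ 4 - 1) / (2 * Real.exp (H * t) ^ 2) := by
      have h2 : (2:ℝ) * Real.exp (H * t) ^ 2 ≠ 0 := by positivity
      rw [Real.sinh_eq, Real.exp_neg, hE4, hE2, div_eq_div_iff two_ne_zero h2]
      field_simp
    have hsq : Real.sqrt (Real.sinh (2 * H * t))
        = Real.sqrt (Real.exp (H * t) ^ 4 - 1) / (Real.sqrt 2 * Real.exp (H * t)) := by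
      rw [hsinh, Real.sqrt_div (by linarith), Real.sqrt_mul (by norm_num),
        Real.sqrt_sq he.le]
    have hD : (0:ℝ) < Real.sqrt (Real.exp (H * t) ^ 4 - 1) :=
      Real.sqrt_pos.mpr (by linarith)
    have habs : |H * Real.exp (H * t)| = H * Real.exp (H * t) :=
      abs_of_pos (mul_pos hH he)
    rw [hsq, habs, smul_eq_mul]
    simp only [hg, hf]
    have hs2 : (0:ℝ) < Real.sqrt 2 := by positivity
    field_simp
  refine ⟨?_, g_integrable, ?_⟩
  · exact MeasureTheory.IntegrableOn.congr_fun (hInt2.const_mul (Real.sqrt 2 / (C₂ * H)))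
      (fun t ht => (hkey t ht).symm) measurableSet_Ioi
  · rw [setIntegral_congr_fun measurableSet_Ioi hkey,
      MeasureTheory.integral_const_mul, ← hCV]
end
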